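/- (Dyadic Kolmogorov-type Hölder extension, deterministic) Let r ≥ 1, integers c_1,…,c_r ≥ 2, and let Z^r_∞(c) be the union over m of the lattices Z^r_m(c) = {(z¹c_1^{-m},…,z^r c_r^{-m}) : 0 ≤ z^i ≤ c_i^m}. Let u : Z^r_∞(c) → R, α > 0, and n ≥ 0 an integer. Suppose for any m ≥ n, any i ∈ {1,…,r}, and any z₁, z₂ ∈ Z^r_m(c) with |z₁^i - z₂^i| ≤ c_i^{-m} and z₁^j = z₂^j for j ≠ i, one has |u(z₁) - u(z₂)| ≤ 2^{-mα}. Then there is a constant N = N(r, c_1,…,c_r, α) such that for all z₁, z₂ ∈ Z^r_∞(c) with |z₁^i - z₂^i| ≤ c_i^{-n-1} for all i: |u(z₁) - u(z₂)| ≤ N · max_i |z₁^i - z₂^i|^{α_i}, where α_i = α ln 2 / ln c_i. Consequently u extends continuously to [0,1]^r and the same estimate holds on [0,1]^r under the same constraint on |z₁^i - z₂^i|. -/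

import Mathlib

open MeasureTheory

open Filter Topology

/-- The lattice `Z^r_m(c)` in `[0,1]^r`, with coordinate `i` running over multiples of
`c_i^{-m}`. -/
def lattice (r : ℕ) (c : Fin r → ℕ) (m : ℕ) : Set (Fin r → ℝ) :=
  {z | ∀ i, ∃ a : ℕ, a ≤ c i ^ m ∧ z i = (a : ℝ) / (c i : ℝ) ^ m}

/-- `Z^r_∞(c) = ⋃_m Z^r_m(c)`. -/
def latticeInf (r : ℕ) (c : Fin r → ℕ) : Set (Fin r → ℝ) :=
  ⋃ m : ℕ, lattice r c m

namespace Stmt15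

variable {r : ℕ} {c : Fin r → ℕ}

/-- rounding to lattice m -/
noncomputable def kap (r : ℕ) (c : Fin r → ℕ) (m : ℕ) (z : Fin r → ℝ) : Fin r → ℝ :=
  fun i => (⌊z i * (c i : ℝ) ^ m⌋₊ : ℝ) / (c i : ℝ) ^ m

lemma cpos (hc : ∀ i, 2 ≤ c i) (i : Fin r) : (0:ℝ) < (c i : ℝ) := by
  have := hc i; positivity

lemma cpowpos (hc : ∀ i, 2 ≤ c i) (i : Fin r) (m : ℕ) : (0:ℝ) < (c i : ℝ) ^ m :=
  pow_pos (cpos hc i) m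

lemma lattice_mono (hc : ∀ i, 2 ≤ c i) {m m' : ℕ} (h : m ≤ m') :
    lattice r c m ⊆ lattice r c m' := by
  intro z hz i
  obtain ⟨a, ha, hz⟩ := hz i
  refine ⟨a * c i ^ (m' - m), ?_, ?_⟩
  · have : c i ^ m * c i ^ (m' - m) = c i ^ m' := by rw [← pow_add]; congr 1; omega
    rw [← this]
    exact Nat.mul_le_mul_right _ ha
  · rw [hz]
    have h1 : (c i : ℝ) ^ m ≠ 0 := ne_of_gt (cpowpos hc i m)
    have h2 : (c i : ℝ) ^ m' ≠ 0 := ne_of_gt (cpowpos hc i m')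
    have : (c i : ℝ) ^ m * (c i : ℝ) ^ (m' - m) = (c i : ℝ) ^ m' := by
      rw [← pow_add]; congr 1; omega
    push_cast
    field_simp
    rw [← this]; ring

lemma lattice_mem_Icc (hc : ∀ i, 2 ≤ c i) {m : ℕ} {z : Fin r → ℝ}
    (hz : z ∈ lattice r c m) (i : Fin r) : z i ∈ Set.Icc (0:ℝ) 1 := by
  obtain ⟨a, ha, hz⟩ := hz i
  have h2 : (0:ℝ) < (c i : ℝ) ^ m := cpowpos hc i m
  constructor
  · rw [hz]; positivity
  · rw [hz, div_le_one h2]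
    exact_mod_cast ha

lemma upd_mem (hc : ∀ i, 2 ≤ c i) {m : ℕ} {z : Fin r → ℝ} (hz : z ∈ lattice r c m)
    (i : Fin r) {a : ℕ} (ha : a ≤ c i ^ m) :
    Function.update z i ((a : ℝ) / (c i : ℝ) ^ m) ∈ lattice r c m := by
  intro j
  rcases eq_or_ne j i with rfl | hji
  · exact ⟨a, ha, by simp⟩
  · obtain ⟨b, hb, hzj⟩ := hz j
    exact ⟨b, hb, by rw [Function.update_of_ne hji]; exact hzj⟩

lemma kap_mem (hc : ∀ i, 2 ≤ c i) {m : ℕ} {z : Fin r → ℝ}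
    (hz : ∀ i, z i ∈ Set.Icc (0:ℝ) 1) : kap r c m z ∈ lattice r c m := by
  intro i
  refine ⟨⌊z i * (c i : ℝ) ^ m⌋₊, ?_, rfl⟩
  have h1 : z i * (c i : ℝ) ^ m ≤ (c i : ℝ) ^ m := by
    nlinarith [(hz i).2, cpowpos hc i m]
  calc ⌊z i * (c i : ℝ) ^ m⌋₊ ≤ ⌊((c i ^ m : ℕ) : ℝ)⌋₊ :=
        Nat.floor_le_floor (by push_cast; exact h1)
    _ = c i ^ m := Nat.floor_natCast _

lemma kap_le (hc : ∀ i, 2 ≤ c i) {m : ℕ} {z : Fin r → ℝ}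
    (hz : ∀ i, z i ∈ Set.Icc (0:ℝ) 1) (i : Fin r) :
    kap r c m z i ≤ z i := by
  have h2 : (0:ℝ) < (c i : ℝ) ^ m := cpowpos hc i m
  rw [kap, div_le_iff₀ h2]
  exact Nat.floor_le (by nlinarith [(hz i).1])

lemma kap_gt (hc : ∀ i, 2 ≤ c i) {m : ℕ} {z : Fin r → ℝ}
    (hz : ∀ i, z i ∈ Set.Icc (0:ℝ) 1) (i : Fin r) :
    z i - ((c i : ℝ) ^ m)⁻¹ < kap r c m z i := by
  have h2 : (0:ℝ) < (c i : ℝ) ^ m := cpowpos hc i m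
  have h3 : z i * (c i : ℝ) ^ m < ⌊z i * (c i : ℝ) ^ m⌋₊ + 1 :=
    Nat.lt_floor_add_one _
  rw [kap, sub_lt_iff_lt_add]
  rw [show (⌊z i * (c i : ℝ) ^ m⌋₊ : ℝ) / (c i : ℝ) ^ m + ((c i : ℝ) ^ m)⁻¹
      = ((⌊z i * (c i : ℝ) ^ m⌋₊ : ℝ) + 1) / (c i : ℝ) ^ m by field_simp]
  rw [lt_div_iff₀ h2]
  linarith

lemma kap_eq (hc : ∀ i, 2 ≤ c i) {m m' : ℕ} (h : m ≤ m') {z : Fin r → ℝ}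
    (hz : z ∈ lattice r c m) : kap r c m' z = z := by
  funext i
  obtain ⟨a, ha, hzi⟩ := lattice_mono hc h hz i
  have h2 : (0:ℝ) < (c i : ℝ) ^ m' := cpowpos hc i m'
  rw [kap, hzi]
  have : (a : ℝ) / (c i : ℝ) ^ m' * (c i : ℝ) ^ m' = (a : ℝ) := by field_simp
  rw [this, Nat.floor_natCast]


/-- `2^{-kα}` -/
noncomputable def tp (α : ℝ) (k : ℕ) : ℝ := (2:ℝ) ^ (-(k:ℝ) * α)

lemma tp_pos (α : ℝ) (k : ℕ) : 0 < tp α k := Real.rpow_pos_of_pos two_pos _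

lemma tp_succ (α : ℝ) (k : ℕ) : tp α (k + 1) = tp α k * (2:ℝ) ^ (-α) := by
  rw [tp, tp, ← Real.rpow_add two_pos]
  congr 1
  push_cast
  ring

lemma tp_anti (hα : 0 < α) {k k' : ℕ} (h : k ≤ k') : tp α k' ≤ tp α k := by
  apply Real.rpow_le_rpow_of_exponent_le one_le_two
  have : (k:ℝ) ≤ (k':ℝ) := by exact_mod_cast h
  nlinarith

/-- the key identity `(c_i^{-k})^{α_i} = 2^{-kα}` -/
lemma key_id (hc : ∀ i, 2 ≤ c i) (hα : 0 < α) (i : Fin r) (k : ℕ) :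
    (((c i : ℝ) ^ k)⁻¹) ^ (α * Real.log 2 / Real.log (c i)) = tp α k := by
  have h1 : (1:ℝ) < (c i : ℝ) := by
    have := hc i; exact_mod_cast Nat.lt_of_lt_of_le one_lt_two this
  have hlog : 0 < Real.log (c i) := Real.log_pos h1
  have hpos : (0:ℝ) < ((c i : ℝ) ^ k)⁻¹ := by positivity
  rw [Real.rpow_def_of_pos hpos, tp, Real.rpow_def_of_pos two_pos]
  congr 1
  rw [Real.log_inv, Real.log_pow]
  field_simp


section U
variable {α : ℝ} {u : (Fin r → ℝ) → ℝ} {n : ℕ}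

/-- Hypothesis predicate -/
def Hyp (r : ℕ) (c : Fin r → ℕ) (α : ℝ) (u : (Fin r → ℝ) → ℝ) (n : ℕ) : Prop :=
  ∀ m : ℕ, n ≤ m → ∀ i : Fin r,
    ∀ z₁ ∈ lattice r c m, ∀ z₂ ∈ lattice r c m,
      |z₁ i - z₂ i| ≤ ((c i : ℝ) ^ m)⁻¹ → (∀ j, j ≠ i → z₁ j = z₂ j) →
      |u z₁ - u z₂| ≤ (2 : ℝ) ^ (-(m : ℝ) * α)

lemma move1 (hc : ∀ i, 2 ≤ c i) (hu : Hyp r c α u n) {m : ℕ} (hm : n ≤ m)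
    {z : Fin r → ℝ} (hz : z ∈ lattice r c m) (i : Fin r) (a d : ℕ)
    (h : a + d ≤ c i ^ m) :
    |u (Function.update z i ((a : ℝ) / (c i : ℝ) ^ m)) -
      u (Function.update z i (((a + d : ℕ) : ℝ) / (c i : ℝ) ^ m))| ≤ d * tp α m := by
  induction d with
  | zero => simp [tp_pos α m |>.le]
  | succ d ih =>
    have h' : a + d ≤ c i ^ m := by omega
    have step : |u (Function.update z i (((a + d : ℕ) : ℝ) / (c i : ℝ) ^ m)) -
        u (Function.update z i (((a + d + 1 : ℕ) : ℝ) / (c i : ℝ) ^ m))| ≤ tp α m := by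
      apply hu m hm i _ (upd_mem hc hz i h') _ (upd_mem hc hz i (by omega : a + d + 1 ≤ c i ^ m))
      · have h2 : (0:ℝ) < (c i : ℝ) ^ m := cpowpos hc i m
        rw [Function.update_self, Function.update_self, div_sub_div_same]
        push_cast
        rw [show ((a:ℝ) + d - (a + d + 1)) = -1 by ring, abs_div, abs_neg, abs_one,
          abs_of_pos h2, one_div]
      · intro j hj
        rw [Function.update_of_ne hj, Function.update_of_ne hj]
    calc |u (Function.update z i ((a : ℝ) / (c i : ℝ) ^ m)) -
        u (Function.update z i (((a + (d+1) : ℕ) : ℝ) / (c i : ℝ) ^ m))|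
        ≤ |u (Function.update z i ((a : ℝ) / (c i : ℝ) ^ m)) -
            u (Function.update z i (((a + d : ℕ) : ℝ) / (c i : ℝ) ^ m))| +
          |u (Function.update z i (((a + d : ℕ) : ℝ) / (c i : ℝ) ^ m)) -
            u (Function.update z i (((a + d + 1 : ℕ) : ℝ) / (c i : ℝ) ^ m))| := by
          rw [show a + (d+1) = a + d + 1 by ring]
          exact abs_sub_le _ _ _
      _ ≤ d * tp α m + tp α m := add_le_add (ih h') step
      _ = (d + 1 : ℕ) * tp α m := by push_cast; ring

/-- one coordinate, at most B unit steps -/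
lemma move_one (hc : ∀ i, 2 ≤ c i) (hu : Hyp r c α u n) {m : ℕ} (hm : n ≤ m)
    {z₁ z₂ : Fin r → ℝ} (hz₁ : z₁ ∈ lattice r c m) (hz₂ : z₂ ∈ lattice r c m)
    (i : Fin r) (B : ℕ) (hd : |z₁ i - z₂ i| ≤ B * ((c i : ℝ) ^ m)⁻¹)
    (hag : ∀ j, j ≠ i → z₁ j = z₂ j) :
    |u z₁ - u z₂| ≤ B * tp α m := by
  obtain ⟨a, ha, hza⟩ := hz₁ i
  obtain ⟨b, hb, hzb⟩ := hz₂ i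
  have h2 : (0:ℝ) < (c i : ℝ) ^ m := cpowpos hc i m
  -- natural distance ≤ B
  have hab : (a : ℝ) - b = (z₁ i - z₂ i) * (c i : ℝ) ^ m := by
    rw [hza, hzb]; field_simp
  have habs : |(a:ℝ) - b| ≤ B := by
    rw [hab, abs_mul, abs_of_pos h2]
    calc |z₁ i - z₂ i| * (c i : ℝ) ^ m ≤ (B * ((c i : ℝ) ^ m)⁻¹) * (c i : ℝ) ^ m :=
        mul_le_mul_of_nonneg_right hd h2.le
      _ = B := by field_simp
  -- wlog via cases
  rcases le_total a b with hle | hle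
  · have hupd1 : z₁ = Function.update z₁ i ((a : ℝ) / (c i : ℝ) ^ m) := by
      funext j; rcases eq_or_ne j i with rfl | hj
      · simp [hza]
      · rw [Function.update_of_ne hj]
    have hupd2 : z₂ = Function.update z₁ i (((a + (b - a) : ℕ) : ℝ) / (c i : ℝ) ^ m) := by
      funext j; rcases eq_or_ne j i with rfl | hj
      · rw [Function.update_self, hzb]; congr 2; omega
      · rw [Function.update_of_ne hj]; exact (hag j hj).symm
    have hd' : b - a ≤ B := by
      have : (b:ℝ) - a ≤ B := by rw [abs_sub_comm] at habs; exact (abs_le.mp habs).2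
      have hba : ((b - a : ℕ) : ℝ) ≤ B := by push_cast [Nat.cast_sub hle] at this ⊢; linarith
      exact_mod_cast hba
    have c1 : |u z₁ - u z₂| ≤ (b - a : ℕ) * tp α m := by
      rw [hupd1, hupd2]
      exact move1 hc hu hm hz₁ i a (b - a) (by omega)
    have c2 : ((b - a : ℕ) : ℝ) * tp α m ≤ B * tp α m := by
      apply mul_le_mul_of_nonneg_right _ (tp_pos α m).le
      exact_mod_cast hd'
    linarith
  · have hupd2 : z₂ = Function.update z₂ i ((b : ℝ) / (c i : ℝ) ^ m) := by
      funext j; rcases eq_or_ne j i with rfl | hj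
      · simp [hzb]
      · rw [Function.update_of_ne hj]
    have hupd1 : z₁ = Function.update z₂ i (((b + (a - b) : ℕ) : ℝ) / (c i : ℝ) ^ m) := by
      funext j; rcases eq_or_ne j i with rfl | hj
      · rw [Function.update_self, hza]; congr 2; omega
      · rw [Function.update_of_ne hj]; exact hag j hj
    have hd' : a - b ≤ B := by
      have : (a:ℝ) - b ≤ B := (abs_le.mp habs).2
      have hba : ((a - b : ℕ) : ℝ) ≤ B := by push_cast [Nat.cast_sub hle] at this ⊢; linarith
      exact_mod_cast hba
    rw [abs_sub_comm]
    have c1 : |u z₂ - u z₁| ≤ (a - b : ℕ) * tp α m := by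
      rw [hupd2, hupd1]
      exact move1 hc hu hm hz₂ i b (a - b) (by omega)
    have c2 : ((a - b : ℕ) : ℝ) * tp α m ≤ B * tp α m := by
      apply mul_le_mul_of_nonneg_right _ (tp_pos α m).le
      exact_mod_cast hd'
    linarith

lemma move (hc : ∀ i, 2 ≤ c i) (hu : Hyp r c α u n) {m : ℕ} (hm : n ≤ m)
    {w₁ w₂ : Fin r → ℝ} (h₁ : w₁ ∈ lattice r c m) (h₂ : w₂ ∈ lattice r c m)
    (b : Fin r → ℕ) (hb : ∀ i, |w₁ i - w₂ i| ≤ b i * ((c i : ℝ) ^ m)⁻¹) :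
    |u w₁ - u w₂| ≤ (∑ i, (b i : ℝ)) * tp α m := by
  classical
  set mix : Finset (Fin r) → (Fin r → ℝ) := fun s i => if i ∈ s then w₂ i else w₁ i with hmix
  have hmem : ∀ s, mix s ∈ lattice r c m := by
    intro s i
    by_cases h : i ∈ s
    · obtain ⟨a, ha, h'⟩ := h₂ i; exact ⟨a, ha, by simp [hmix, h, h']⟩
    · obtain ⟨a, ha, h'⟩ := h₁ i; exact ⟨a, ha, by simp [hmix, h, h']⟩
  have main : ∀ s : Finset (Fin r), |u w₁ - u (mix s)| ≤ (∑ i ∈ s, (b i : ℝ)) * tp α m := by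
    intro s
    induction s using Finset.induction_on with
    | empty => simp [hmix, (tp_pos α m).le]
    | insert _ _ hnot _ =>
      rename_i i s ih
      have step : |u (mix s) - u (mix (insert i s))| ≤ b i * tp α m := by
        apply move_one hc hu hm (hmem s) (hmem (insert i s)) i (b i)
        · have e1 : mix s i = w₁ i := by simp [hmix, hnot]
          have e2 : mix (insert i s) i = w₂ i := by simp [hmix]
          rw [e1, e2]; exact hb i
        · intro j hj
          simp only [hmix, Finset.mem_insert]
          by_cases h : j ∈ s <;> simp [h, hj]
      calc |u w₁ - u (mix (insert i s))|
          ≤ |u w₁ - u (mix s)| + |u (mix s) - u (mix (insert i s))| := abs_sub_le _ _ _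
        _ ≤ (∑ j ∈ s, (b j : ℝ)) * tp α m + b i * tp α m := add_le_add ih step
        _ = (∑ j ∈ insert i s, (b j : ℝ)) * tp α m := by
            rw [Finset.sum_insert hnot]; ring
  have heq : mix Finset.univ = w₂ := by funext i; simp [hmix]
  have := main Finset.univ
  rwa [heq] at this

lemma kap_step_bound (hc : ∀ i, 2 ≤ c i) {z : Fin r → ℝ}
    (hz : ∀ i, z i ∈ Set.Icc (0:ℝ) 1) (j : ℕ) (i : Fin r) :
    |kap r c (j+1) z i - kap r c j z i| ≤ ((c i - 1 : ℕ) : ℝ) * ((c i : ℝ) ^ (j+1))⁻¹ := by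
  have hcp := cpos hc i
  have hc1 : (2:ℝ) ≤ (c i : ℝ) := by exact_mod_cast hc i
  have h2 : (0:ℝ) < (c i : ℝ) ^ j := cpowpos hc i j
  have h3 : (0:ℝ) < (c i : ℝ) ^ (j+1) := cpowpos hc i (j+1)
  set a : ℕ := ⌊z i * (c i : ℝ) ^ j⌋₊ with ha
  set bn : ℕ := ⌊z i * (c i : ℝ) ^ (j+1)⌋₊ with hb
  have hA1 : kap r c j z i ≤ z i := kap_le hc hz i
  have hA2 : z i - ((c i : ℝ) ^ j)⁻¹ < kap r c j z i := kap_gt hc hz i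
  have hB1 : kap r c (j+1) z i ≤ z i := kap_le hc hz i
  have hB2 : z i - ((c i : ℝ) ^ (j+1))⁻¹ < kap r c (j+1) z i := kap_gt hc hz i
  have hlt : |kap r c (j+1) z i - kap r c j z i| < ((c i : ℝ) ^ j)⁻¹ := by
    rw [abs_lt]
    constructor
    · have : ((c i : ℝ) ^ (j+1))⁻¹ ≤ ((c i : ℝ) ^ j)⁻¹ := by
        apply inv_anti₀ h2
        calc (c i : ℝ) ^ j = (c i : ℝ) ^ j * 1 := by ring
          _ ≤ (c i : ℝ) ^ j * c i := by nlinarith [hc1, h2]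
          _ = (c i : ℝ) ^ (j+1) := by ring
      nlinarith
    · nlinarith
  set K : ℤ := (bn : ℤ) - (a : ℤ) * c i with hK
  have hrepr : kap r c (j+1) z i - kap r c j z i = (K : ℝ) / (c i : ℝ) ^ (j+1) := by
    rw [kap, kap, ← ha, ← hb, hK]
    push_cast
    field_simp
    ring
  have hKlt : |(K : ℝ)| < c i := by
    rw [hrepr, abs_div, abs_of_pos h3] at hlt
    rw [div_lt_iff₀ h3] at hlt
    calc |(K:ℝ)| < ((c i : ℝ) ^ j)⁻¹ * (c i : ℝ) ^ (j+1) := hlt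
      _ = c i := by rw [pow_succ]; field_simp
  have hKle : |(K : ℝ)| ≤ ((c i - 1 : ℕ) : ℝ) := by
    have h1 : |K| < (c i : ℤ) := by exact_mod_cast hKlt
    have h2' : |K| ≤ (c i : ℤ) - 1 := by omega
    have : ((c i - 1 : ℕ) : ℤ) = (c i : ℤ) - 1 := by
      have := hc i; omega
    rw [← this] at h2'
    exact_mod_cast h2'
  rw [hrepr, abs_div, abs_of_pos h3, div_le_iff₀ h3]
  calc |(K:ℝ)| ≤ ((c i - 1 : ℕ) : ℝ) := hKle
    _ = ((c i - 1 : ℕ) : ℝ) * (((c i : ℝ) ^ (j+1))⁻¹ * (c i : ℝ) ^ (j+1)) := by field_simp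
    _ = ((c i - 1 : ℕ) : ℝ) * ((c i : ℝ) ^ (j+1))⁻¹ * (c i : ℝ) ^ (j+1) := by ring

lemma descend (hc : ∀ i, 2 ≤ c i) (hu : Hyp r c α u n) {j : ℕ} (hj : n ≤ j)
    {z : Fin r → ℝ} (hz : ∀ i, z i ∈ Set.Icc (0:ℝ) 1) :
    |u (kap r c (j+1) z) - u (kap r c j z)| ≤ (∑ i, ((c i - 1 : ℕ) : ℝ)) * tp α (j+1) := by
  apply move hc hu (by omega) (kap_mem hc hz)
    (lattice_mono hc (by omega) (kap_mem hc hz))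
  intro i
  exact kap_step_bound hc hz j i

lemma tp_tel (hα : 0 < α) (j : ℕ) :
    tp α (j+1) = ((2:ℝ)^α - 1)⁻¹ * (tp α j - tp α (j+1)) := by
  have hE : (1:ℝ) < (2:ℝ)^α := Real.one_lt_rpow_iff_of_pos two_pos |>.mpr (Or.inl ⟨one_lt_two, hα⟩)
  have hEe : (2:ℝ)^α * (2:ℝ)^(-α) = 1 := by
    rw [← Real.rpow_add two_pos]; simp
  have hne : (2:ℝ)^α - 1 ≠ 0 := by linarith
  rw [tp_succ]
  field_simp
  nlinarith [tp_pos α j]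

lemma Qpos (hα : 0 < α) : 0 < ((2:ℝ)^α - 1)⁻¹ := by
  have hE : (1:ℝ) < (2:ℝ)^α := Real.one_lt_rpow_iff_of_pos two_pos |>.mpr (Or.inl ⟨one_lt_two, hα⟩)
  have : 0 < (2:ℝ)^α - 1 := by linarith
  positivity

lemma tel (hc : ∀ i, 2 ≤ c i) (hα : 0 < α) (hu : Hyp r c α u n)
    {z : Fin r → ℝ} (hz : ∀ i, z i ∈ Set.Icc (0:ℝ) 1) {k : ℕ} (hk : n ≤ k) :
    ∀ m, k ≤ m → |u (kap r c m z) - u (kap r c k z)| ≤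
      (∑ i, ((c i - 1 : ℕ) : ℝ)) * (((2:ℝ)^α - 1)⁻¹ * tp α k - ((2:ℝ)^α - 1)⁻¹ * tp α m) := by
  set S := ∑ i, ((c i - 1 : ℕ) : ℝ) with hS
  have hS0 : 0 ≤ S := Finset.sum_nonneg fun i _ => by positivity
  set Q := ((2:ℝ)^α - 1)⁻¹ with hQ
  intro m hm
  induction m, hm using Nat.le_induction with
  | base => simp
  | succ m hm ih =>
    specialize ih
    have hstep : |u (kap r c (m+1) z) - u (kap r c m z)| ≤ S * tp α (m+1) :=
      descend hc hu (by omega) hz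
    have htel : tp α (m+1) = Q * (tp α m - tp α (m+1)) := tp_tel hα m
    calc |u (kap r c (m+1) z) - u (kap r c k z)|
        ≤ |u (kap r c (m+1) z) - u (kap r c m z)| +
          |u (kap r c m z) - u (kap r c k z)| := abs_sub_le _ _ _
      _ ≤ S * tp α (m+1) + (S * (Q * tp α k - Q * tp α m)) := add_le_add hstep ih
      _ = S * (Q * tp α k - Q * tp α (m+1)) := by linear_combination S * htel

lemma tp_pred (hα : 0 < α) (k : ℕ) : tp α k = (2:ℝ)^α * tp α (k+1) := by
  rw [tp_succ]
  have : (2:ℝ)^(-α) * (2:ℝ)^α = 1 := by rw [← Real.rpow_add two_pos]; simp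
  calc tp α k = tp α k * ((2:ℝ)^(-α) * (2:ℝ)^α) := by rw [this]; ring
    _ = (2:ℝ)^α * (tp α k * (2:ℝ)^(-α)) := by ring

/-- the core estimate -/
lemma core (hr : 1 ≤ r) (hc : ∀ i, 2 ≤ c i) (hα : 0 < α) (hu : Hyp r c α u n)
    {z₁ z₂ : Fin r → ℝ} (h₁ : z₁ ∈ latticeInf r c) (h₂ : z₂ ∈ latticeInf r c)
    (hd : ∀ i, |z₁ i - z₂ i| ≤ ((c i : ℝ) ^ n)⁻¹) :
    |u z₁ - u z₂| ≤
      ((2 * (∑ i, ((c i - 1 : ℕ) : ℝ)) * ((2:ℝ)^α - 1)⁻¹ + 2 * r) * (2:ℝ)^α) *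
        ⨆ i : Fin r, |z₁ i - z₂ i| ^ (α * Real.log 2 / Real.log (c i)) := by
  classical
  haveI : Nonempty (Fin r) := ⟨⟨0, hr⟩⟩
  set S := ∑ i, ((c i - 1 : ℕ) : ℝ) with hS
  have hS0 : 0 ≤ S := Finset.sum_nonneg fun i _ => by positivity
  set Q := ((2:ℝ)^α - 1)⁻¹ with hQ
  have hQ0 : 0 < Q := Qpos hα
  set N₀ := (2 * S * Q + 2 * r) * (2:ℝ)^α with hN₀
  have hN₀0 : 0 ≤ N₀ := by
    have h2a : (0:ℝ) < (2:ℝ)^α := Real.rpow_pos_of_pos two_pos _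
    have hr' : (1:ℝ) ≤ r := by exact_mod_cast hr
    positivity
  set f : Fin r → ℝ := fun i => |z₁ i - z₂ i| ^ (α * Real.log 2 / Real.log (c i)) with hf
  have hαi : ∀ i, 0 < α * Real.log 2 / Real.log (c i) := by
    intro i
    have h1 : (1:ℝ) < (c i : ℝ) := by
      have := hc i; exact_mod_cast Nat.lt_of_lt_of_le one_lt_two this
    have := Real.log_pos h1
    have := Real.log_pos one_lt_two
    positivity
  have hbdd : BddAbove (Set.range f) := (Set.finite_range f).bddAbove
  have hsle : ∀ i, f i ≤ ⨆ j, f j := fun i => le_ciSup hbdd i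
  by_cases hzz : z₁ = z₂
  · subst hzz
    have : ∀ i, f i = 0 := by
      intro i
      simp only [hf, sub_self, abs_zero]
      exact Real.zero_rpow (ne_of_gt (hαi i))
    rw [show (⨆ i, f i) = 0 by simp only [this]; exact ciSup_const]
    simp [mul_comm]
  -- main case
  obtain ⟨m₁, hm₁⟩ := Set.mem_iUnion.mp h₁
  obtain ⟨m₂, hm₂⟩ := Set.mem_iUnion.mp h₂
  set m := max (max m₁ m₂) n with hm
  have hz₁ : z₁ ∈ lattice r c m := lattice_mono hc (by omega) hm₁
  have hz₂ : z₂ ∈ lattice r c m := lattice_mono hc (by omega) hm₂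
  have hnm : n ≤ m := by omega
  set P : ℕ → Prop := fun k => ∀ i, |z₁ i - z₂ i| ≤ ((c i : ℝ) ^ k)⁻¹ with hP
  set k := Nat.findGreatest P m with hk
  have hkn : n ≤ k := Nat.le_findGreatest hnm hd
  have hPk : P k := Nat.findGreatest_spec hnm hd
  have hkm : k ≤ m := Nat.findGreatest_le m
  -- a coordinate realizing the scale
  have hstar : ∃ i, ((c i : ℝ) ^ (k+1))⁻¹ ≤ |z₁ i - z₂ i| := by
    rcases lt_or_eq_of_le hkm with hlt | heq
    · have hnP : ¬ P (k+1) := Nat.findGreatest_is_greatest (hk ▸ Nat.lt_succ_self k) (by omega)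
      rw [hP] at hnP
      obtain ⟨i, hi⟩ := not_forall.mp hnP
      exact ⟨i, (not_le.mp hi).le⟩
    · obtain ⟨i₀, hi₀⟩ : ∃ i, z₁ i ≠ z₂ i := by
        by_contra h
        push_neg at h
        exact hzz (funext h)
      refine ⟨i₀, ?_⟩
      obtain ⟨a, ha, hza⟩ := hz₁ i₀
      obtain ⟨b, hb, hzb⟩ := hz₂ i₀
      have h2 : (0:ℝ) < (c i₀ : ℝ) ^ m := cpowpos hc i₀ m
      have hab : a ≠ b := by
        intro h; apply hi₀; rw [hza, hzb, h]
      have h1 : (1:ℝ) ≤ |(a:ℝ) - b| := by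
        rcases Nat.lt_or_ge a b with h | h
        · have hx : (a:ℝ) + 1 ≤ b := by exact_mod_cast h
          rw [abs_sub_comm, abs_of_nonneg (by linarith)]; linarith
        · have hba : b < a := lt_of_le_of_ne h (Ne.symm hab)
          have hx : (b:ℝ) + 1 ≤ a := by exact_mod_cast hba
          rw [abs_of_nonneg (by linarith)]; linarith
      have hge : ((c i₀ : ℝ) ^ m)⁻¹ ≤ |z₁ i₀ - z₂ i₀| := by
        rw [hza, hzb, div_sub_div_same, abs_div, abs_of_pos h2, le_div_iff₀ h2, inv_mul_cancel₀ (ne_of_gt h2)]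
        exact h1
      refine le_trans ?_ hge
      apply inv_anti₀ h2
      apply pow_le_pow_right₀
      · have h := hc i₀
        have : (2:ℝ) ≤ (c i₀ : ℝ) := by exact_mod_cast h
        linarith
      · omega
  -- tp α k ≤ 2^α * sup
  have htp : tp α k ≤ (2:ℝ)^α * ⨆ j, f j := by
    obtain ⟨i, hi⟩ := hstar
    have h1 : tp α (k+1) ≤ f i := by
      rw [← key_id hc hα i (k+1), hf]
      apply Real.rpow_le_rpow (by positivity) hi (hαi i).le
    have h2 : tp α (k+1) ≤ ⨆ j, f j := le_trans h1 (hsle i)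
    rw [tp_pred hα k]
    have h2a : (0:ℝ) < (2:ℝ)^α := Real.rpow_pos_of_pos two_pos _
    nlinarith
  -- telescoping bounds
  have hzc₁ : ∀ i, z₁ i ∈ Set.Icc (0:ℝ) 1 := lattice_mem_Icc hc hz₁
  have hzc₂ : ∀ i, z₂ i ∈ Set.Icc (0:ℝ) 1 := lattice_mem_Icc hc hz₂
  have htel₁ : |u z₁ - u (kap r c k z₁)| ≤ S * Q * tp α k := by
    have := tel hc hα hu hzc₁ hkn m hkm
    rw [kap_eq hc le_rfl hz₁] at this
    nlinarith [tp_pos α m, mul_pos hQ0 (tp_pos α m)]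
  have htel₂ : |u (kap r c k z₂) - u z₂| ≤ S * Q * tp α k := by
    have := tel hc hα hu hzc₂ hkn m hkm
    rw [kap_eq hc le_rfl hz₂, abs_sub_comm] at this
    nlinarith [tp_pos α m, mul_pos hQ0 (tp_pos α m)]
  -- cross bound
  have hcross : |u (kap r c k z₁) - u (kap r c k z₂)| ≤ 2 * r * tp α k := by
    have := move (u := u) hc hu hkn (kap_mem hc hzc₁) (kap_mem hc hzc₂) (fun _ => 2) ?_
    · have hsum : (∑ _i : Fin r, ((2:ℕ):ℝ)) = 2 * r := by
        simp [Finset.sum_const, Finset.card_univ, mul_comm]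
      rwa [hsum] at this
    · intro i
      have hA1 := kap_le (m := k) hc hzc₁ i
      have hA2 := kap_gt (m := k) hc hzc₁ i
      have hB1 := kap_le (m := k) hc hzc₂ i
      have hB2 := kap_gt (m := k) hc hzc₂ i
      have hdk := hPk i
      have habs := abs_le.mp hdk
      rw [abs_le]
      push_cast
      constructor <;> nlinarith
  have tri : |u z₁ - u z₂|
      ≤ |u z₁ - u (kap r c k z₁)| + |u (kap r c k z₁) - u (kap r c k z₂)| +
        |u (kap r c k z₂) - u z₂| := by
    have t1 := abs_sub_le (u z₁) (u (kap r c k z₁)) (u z₂)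
    have t2 := abs_sub_le (u (kap r c k z₁)) (u (kap r c k z₂)) (u z₂)
    linarith
  calc |u z₁ - u z₂|
      ≤ |u z₁ - u (kap r c k z₁)| + |u (kap r c k z₁) - u (kap r c k z₂)| +
        |u (kap r c k z₂) - u z₂| := tri
    _ ≤ S * Q * tp α k + 2 * r * tp α k + S * Q * tp α k :=
        add_le_add (add_le_add htel₁ hcross) htel₂
    _ = (2 * S * Q + 2 * r) * tp α k := by ring
    _ ≤ (2 * S * Q + 2 * r) * ((2:ℝ)^α * ⨆ j, f j) := by
        apply mul_le_mul_of_nonneg_left htp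
        have hr' : (1:ℝ) ≤ r := by exact_mod_cast hr
        positivity
    _ = N₀ * ⨆ j, f j := by rw [hN₀]; ring

lemma tp_geom (hα : 0 < α) (n j : ℕ) : tp α (n + 1 + j) = tp α (n+1) * ((2:ℝ)^(-α))^j := by
  have : ((2:ℝ)^(-α))^j = (2:ℝ)^(-(j:ℝ)*α) := by
    rw [← Real.rpow_natCast ((2:ℝ)^(-α)) j, ← Real.rpow_mul (by norm_num : (0:ℝ) ≤ 2)]
    congr 1; ring
  rw [this, tp, tp, ← Real.rpow_add two_pos]
  congr 1; push_cast; ring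

lemma vCauchy (hc : ∀ i, 2 ≤ c i) (hα : 0 < α) (hu : Hyp r c α u n)
    {z : Fin r → ℝ} (hz : ∀ i, z i ∈ Set.Icc (0:ℝ) 1) :
    CauchySeq (fun j => u (kap r c (n + j) z)) := by
  apply cauchySeq_of_le_geometric ((2:ℝ)^(-α))
    ((∑ i, ((c i - 1 : ℕ) : ℝ)) * tp α (n+1))
    (Real.rpow_lt_one_of_one_lt_of_neg one_lt_two (by linarith))
  intro j
  rw [Real.dist_eq]
  have h1 : |u (kap r c (n + j) z) - u (kap r c (n + (j+1)) z)| ≤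
      (∑ i, ((c i - 1 : ℕ) : ℝ)) * tp α (n + j + 1) := by
    rw [abs_sub_comm]
    have := descend hc hu (j := n + j) (by omega) hz
    convert this using 3
    rfl
  calc |u (kap r c (n + j) z) - u (kap r c (n + (j+1)) z)|
      ≤ (∑ i, ((c i - 1 : ℕ) : ℝ)) * tp α (n + j + 1) := h1
    _ = (∑ i, ((c i - 1 : ℕ) : ℝ)) * tp α (n+1) * ((2:ℝ)^(-α))^j := by
        rw [show n + j + 1 = n + 1 + j by omega, tp_geom hα]; ring

/-- the extension -/
noncomputable def vext (r : ℕ) (c : Fin r → ℕ) (u : (Fin r → ℝ) → ℝ) (n : ℕ)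
    (z : Fin r → ℝ) : ℝ :=
  limUnder atTop (fun j => u (kap r c (n + j) z))

lemma vext_tendsto (hc : ∀ i, 2 ≤ c i) (hα : 0 < α) (hu : Hyp r c α u n)
    {z : Fin r → ℝ} (hz : ∀ i, z i ∈ Set.Icc (0:ℝ) 1) :
    Tendsto (fun j => u (kap r c (n + j) z)) atTop (𝓝 (vext r c u n z)) :=
  (vCauchy hc hα hu hz).tendsto_limUnder

lemma vext_eq (hc : ∀ i, 2 ≤ c i) {z : Fin r → ℝ} (hz : z ∈ latticeInf r c) :
    vext r c u n z = u z := by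
  obtain ⟨m₀, hm₀⟩ := Set.mem_iUnion.mp hz
  apply Filter.Tendsto.limUnder_eq
  apply Tendsto.congr' _ (tendsto_const_nhds :
    Tendsto (fun _ : ℕ => u z) atTop (𝓝 (u z)))
  rw [Filter.EventuallyEq, eventually_atTop]
  exact ⟨m₀, fun j hj => by rw [kap_eq hc (by omega) hm₀]⟩

/-- Hölder estimate for the extension -/
lemma vext_holder (hr : 1 ≤ r) (hc : ∀ i, 2 ≤ c i) (hα : 0 < α) (hu : Hyp r c α u n)
    {z₁ z₂ : Fin r → ℝ} (h₁ : ∀ i, z₁ i ∈ Set.Icc (0:ℝ) 1)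
    (h₂ : ∀ i, z₂ i ∈ Set.Icc (0:ℝ) 1)
    (hd : ∀ i, |z₁ i - z₂ i| ≤ ((c i : ℝ) ^ (n+1))⁻¹) :
    |vext r c u n z₁ - vext r c u n z₂| ≤
      ((2 * (∑ i, ((c i - 1 : ℕ) : ℝ)) * ((2:ℝ)^α - 1)⁻¹ + 2 * r) * (2:ℝ)^α) *
        ⨆ i : Fin r, |z₁ i - z₂ i| ^ (α * Real.log 2 / Real.log (c i)) := by
  haveI : Nonempty (Fin r) := ⟨⟨0, hr⟩⟩
  set N₀ := (2 * (∑ i, ((c i - 1 : ℕ) : ℝ)) * ((2:ℝ)^α - 1)⁻¹ + 2 * r) * (2:ℝ)^α with hN₀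
  have hN₀0 : 0 ≤ N₀ := by
    have hS0 : 0 ≤ ∑ i, ((c i - 1 : ℕ) : ℝ) := Finset.sum_nonneg fun i _ => by positivity
    have hQ0 := Qpos (α := α) hα
    have h2a : (0:ℝ) < (2:ℝ)^α := Real.rpow_pos_of_pos two_pos _
    have hr' : (1:ℝ) ≤ r := by exact_mod_cast hr
    positivity
  set ai : Fin r → ℝ := fun i => α * Real.log 2 / Real.log (c i) with hai
  have hαi : ∀ i, 0 < ai i := by
    intro i
    have h1 : (1:ℝ) < (c i : ℝ) := by
      have := hc i; exact_mod_cast Nat.lt_of_lt_of_le one_lt_two this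
    have := Real.log_pos h1
    have := Real.log_pos one_lt_two
    rw [hai]; positivity
  set f : Fin r → ℝ := fun i => |z₁ i - z₂ i| ^ ai i with hf
  set e : Fin r → ℕ → ℝ := fun i j => ((c i : ℝ) ^ (n + j))⁻¹ with he
  have he0 : ∀ i j, 0 < e i j := fun i j => by
    have := cpowpos hc i (n + j); rw [he]; positivity
  -- the limit of the lattice differences
  have hL : Tendsto (fun j => |u (kap r c (n + j) z₁) - u (kap r c (n + j) z₂)|)
      atTop (𝓝 (|vext r c u n z₁ - vext r c u n z₂|)) :=
    ((vext_tendsto hc hα hu h₁).sub (vext_tendsto hc hα hu h₂)).abs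
  -- the upper bound sequence
  set g : ℕ → ℝ := fun j =>
    N₀ * ((⨆ i, f i) + ∑ i, ((|z₁ i - z₂ i| + e i j) ^ ai i - |z₁ i - z₂ i| ^ ai i)) with hg
  have hbound : ∀ j, 1 ≤ j →
      |u (kap r c (n + j) z₁) - u (kap r c (n + j) z₂)| ≤ g j := by
    intro j hj
    have hk₁ : kap r c (n+j) z₁ ∈ latticeInf r c :=
      Set.mem_iUnion.mpr ⟨n+j, kap_mem hc h₁⟩
    have hk₂ : kap r c (n+j) z₂ ∈ latticeInf r c :=
      Set.mem_iUnion.mpr ⟨n+j, kap_mem hc h₂⟩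
    have hdiff : ∀ i, |kap r c (n+j) z₁ i - kap r c (n+j) z₂ i| ≤ |z₁ i - z₂ i| + e i j := by
      intro i
      have hA1 := kap_le (m := n+j) hc h₁ i
      have hA2 := kap_gt (m := n+j) hc h₁ i
      have hB1 := kap_le (m := n+j) hc h₂ i
      have hB2 := kap_gt (m := n+j) hc h₂ i
      rw [abs_le]
      have h4 := neg_abs_le (z₁ i - z₂ i)
      have h5 := le_abs_self (z₁ i - z₂ i)
      rw [he]
      constructor <;> nlinarith
    have hdn : ∀ i, |kap r c (n+j) z₁ i - kap r c (n+j) z₂ i| ≤ ((c i : ℝ) ^ n)⁻¹ := by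
      intro i
      have hc2 : (2:ℝ) ≤ (c i : ℝ) := by exact_mod_cast hc i
      have hp : (0:ℝ) < (c i : ℝ) ^ n := cpowpos hc i n
      have he1 : e i j ≤ ((c i : ℝ) ^ (n+1))⁻¹ := by
        rw [he]
        apply inv_anti₀ (cpowpos hc i (n+1))
        apply pow_le_pow_right₀ (by linarith)
        omega
      have h6 : ((c i : ℝ) ^ (n+1))⁻¹ * 2 ≤ ((c i : ℝ) ^ n)⁻¹ := by
        rw [pow_succ]
        rw [mul_inv]
        have : (c i : ℝ)⁻¹ * 2 ≤ 1 := by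
          rw [inv_mul_le_iff₀ (by linarith : (0:ℝ) < (c i : ℝ))]
          linarith
        calc (((c i):ℝ)^n)⁻¹ * (c i : ℝ)⁻¹ * 2 = (((c i):ℝ)^n)⁻¹ * ((c i : ℝ)⁻¹ * 2) := by ring
          _ ≤ (((c i):ℝ)^n)⁻¹ * 1 := by
              apply mul_le_mul_of_nonneg_left this (by positivity)
          _ = (((c i):ℝ)^n)⁻¹ := by ring
      calc |kap r c (n+j) z₁ i - kap r c (n+j) z₂ i| ≤ |z₁ i - z₂ i| + e i j := hdiff i
        _ ≤ ((c i : ℝ) ^ (n+1))⁻¹ + ((c i : ℝ) ^ (n+1))⁻¹ := add_le_add (hd i) he1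
        _ ≤ ((c i : ℝ) ^ n)⁻¹ := by linarith
    have hcore := core hr hc hα hu hk₁ hk₂ hdn
    refine le_trans hcore ?_
    rw [hg]
    apply mul_le_mul_of_nonneg_left _ hN₀0
    apply ciSup_le
    intro i
    have r1 : |kap r c (n+j) z₁ i - kap r c (n+j) z₂ i| ^ ai i
        ≤ (|z₁ i - z₂ i| + e i j) ^ ai i :=
      Real.rpow_le_rpow (abs_nonneg _) (hdiff i) (hαi i).le
    have r2 : f i ≤ ⨆ i', f i' := le_ciSup ((Set.finite_range f).bddAbove) i
    have r3 : ∀ i', 0 ≤ (|z₁ i' - z₂ i'| + e i' j) ^ ai i' - |z₁ i' - z₂ i'| ^ ai i' := by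
      intro i'
      have := Real.rpow_le_rpow (abs_nonneg (z₁ i' - z₂ i'))
        (by nlinarith [he0 i' j, abs_nonneg (z₁ i' - z₂ i')] :
          |z₁ i' - z₂ i'| ≤ |z₁ i' - z₂ i'| + e i' j) (hαi i').le
      linarith
    have r4 : (|z₁ i - z₂ i| + e i j) ^ ai i - |z₁ i - z₂ i| ^ ai i
        ≤ ∑ i', ((|z₁ i' - z₂ i'| + e i' j) ^ ai i' - |z₁ i' - z₂ i'| ^ ai i') :=
      Finset.single_le_sum (fun i' _ => r3 i') (Finset.mem_univ i)
    have : |kap r c (n+j) z₁ i - kap r c (n+j) z₂ i| ^ ai i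
        ≤ f i + ((|z₁ i - z₂ i| + e i j) ^ ai i - |z₁ i - z₂ i| ^ ai i) := by
      rw [hf]; simp only []; linarith
    linarith
  -- the bound sequence tends to N₀ * sup
  have hgtend : Tendsto g atTop (𝓝 (N₀ * ((⨆ i, f i) + 0))) := by
    apply Tendsto.const_mul
    apply Tendsto.const_add
    have : Tendsto (fun j => ∑ i, ((|z₁ i - z₂ i| + e i j) ^ ai i - |z₁ i - z₂ i| ^ ai i))
        atTop (𝓝 (∑ i : Fin r, (0:ℝ))) := by
      apply tendsto_finset_sum
      intro i _
      have h1 : Tendsto (fun j => e i j) atTop (𝓝 0) := by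
        rw [he]
        simp only []
        apply Tendsto.inv_tendsto_atTop
        have key : ∀ j : ℕ, ((j + n : ℕ) : ℝ) ≤ (c i : ℝ) ^ (n + j) := by
          intro j
          have hc2 : (2:ℝ) ≤ (c i : ℝ) := by exact_mod_cast hc i
          calc ((j + n : ℕ) : ℝ) ≤ (2:ℝ) ^ (j + n) := by
                exact_mod_cast Nat.le_of_lt (Nat.lt_two_pow_self (n := j+n))
            _ = (2:ℝ) ^ (n + j) := by rw [Nat.add_comm]
            _ ≤ (c i : ℝ) ^ (n + j) := by
                apply pow_le_pow_left₀ (by norm_num) hc2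
        exact tendsto_atTop_mono key
          (tendsto_natCast_atTop_atTop.comp (tendsto_add_atTop_nat n))
      have h2 : Tendsto (fun j => |z₁ i - z₂ i| + e i j) atTop (𝓝 (|z₁ i - z₂ i|)) := by
        have h2' := (tendsto_const_nhds :
          Tendsto (fun _ : ℕ => |z₁ i - z₂ i|) atTop (𝓝 (|z₁ i - z₂ i|))).add h1
        simpa using h2'
      have h3 : ContinuousAt (fun x : ℝ => x ^ ai i) (|z₁ i - z₂ i|) :=
        Real.continuousAt_rpow_const _ _ (Or.inr (hαi i).le)
      have h4 := (h3.tendsto.comp h2).sub (tendsto_const_nhds :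
        Tendsto (fun _ : ℕ => |z₁ i - z₂ i| ^ ai i) atTop (𝓝 (|z₁ i - z₂ i| ^ ai i)))
      simpa using h4
    simpa using this
  have := le_of_tendsto_of_tendsto hL hgtend
    (eventually_atTop.mpr ⟨1, hbound⟩)
  simpa [hN₀] using this

lemma vext_cont (hr : 1 ≤ r) (hc : ∀ i, 2 ≤ c i) (hα : 0 < α) (hu : Hyp r c α u n) :
    ContinuousOn (vext r c u n) (Set.univ.pi fun _ : Fin r => Set.Icc (0:ℝ) 1) := by
  haveI : Nonempty (Fin r) := ⟨⟨0, hr⟩⟩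
  set N₀ := (2 * (∑ i, ((c i - 1 : ℕ) : ℝ)) * ((2:ℝ)^α - 1)⁻¹ + 2 * r) * (2:ℝ)^α with hN₀
  have hN₀0 : 0 ≤ N₀ := by
    have hS0 : 0 ≤ ∑ i, ((c i - 1 : ℕ) : ℝ) := Finset.sum_nonneg fun i _ => by positivity
    have hQ0 := Qpos (α := α) hα
    have h2a : (0:ℝ) < (2:ℝ)^α := Real.rpow_pos_of_pos two_pos _
    have hr' : (1:ℝ) ≤ r := by exact_mod_cast hr
    positivity
  set ai : Fin r → ℝ := fun i => α * Real.log 2 / Real.log (c i) with hai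
  have hαi : ∀ i, 0 < ai i := by
    intro i
    have h1 : (1:ℝ) < (c i : ℝ) := by
      have := hc i; exact_mod_cast Nat.lt_of_lt_of_le one_lt_two this
    have := Real.log_pos h1
    have := Real.log_pos one_lt_two
    rw [hai]; positivity
  set s := Set.univ.pi fun _ : Fin r => Set.Icc (0:ℝ) 1 with hs
  intro z₀ hz₀
  have hz₀' : ∀ i, z₀ i ∈ Set.Icc (0:ℝ) 1 := fun i => hz₀ i (Set.mem_univ i)
  set ρ := Finset.univ.inf' Finset.univ_nonempty (fun i => ((c i : ℝ) ^ (n+1))⁻¹) with hρ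
  have hρ0 : 0 < ρ := by
    rw [hρ, Finset.lt_inf'_iff]
    intro i _
    exact inv_pos.mpr (cpowpos hc i (n+1))
  have hρle : ∀ i, ρ ≤ ((c i : ℝ)^(n+1))⁻¹ := fun i =>
    Finset.inf'_le _ (Finset.mem_univ i)
  have hev : ∀ᶠ z in 𝓝[s] z₀, dist (vext r c u n z) (vext r c u n z₀) ≤
      N₀ * ∑ i, |z i - z₀ i| ^ ai i := by
    filter_upwards [self_mem_nhdsWithin,
      nhdsWithin_le_nhds (Metric.ball_mem_nhds z₀ hρ0)] with z hzs hzb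
    have hd : ∀ i, |z i - z₀ i| ≤ ((c i : ℝ)^(n+1))⁻¹ := by
      intro i
      have h1 : dist (z i) (z₀ i) ≤ dist z z₀ := dist_le_pi_dist z z₀ i
      have h2 : dist z z₀ < ρ := hzb
      rw [Real.dist_eq] at h1
      linarith [hρle i]
    have hhol := vext_holder hr hc hα hu (fun i => hzs i (Set.mem_univ i)) hz₀' hd
    rw [Real.dist_eq]
    refine le_trans hhol ?_
    apply mul_le_mul_of_nonneg_left _ hN₀0
    simp only [hai]
    apply ciSup_le
    intro i
    exact Finset.single_le_sum
      (f := fun i' => |z i' - z₀ i'| ^ (α * Real.log 2 / Real.log (c i')))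
      (fun i' _ => Real.rpow_nonneg (abs_nonneg _) _) (Finset.mem_univ i)
  have htend0 : Tendsto (fun z => N₀ * ∑ i, |z i - z₀ i| ^ ai i) (𝓝[s] z₀)
      (𝓝 (N₀ * ∑ _i : Fin r, (0:ℝ))) := by
    apply Tendsto.const_mul
    apply tendsto_finset_sum
    intro i _
    have hco : Continuous (fun z : Fin r → ℝ => |z i - z₀ i|) :=
      ((continuous_apply i).sub continuous_const).abs
    have h1 : Tendsto (fun z : Fin r → ℝ => |z i - z₀ i|) (𝓝[s] z₀) (𝓝 0) := by
      have := (hco.tendsto z₀).mono_left (nhdsWithin_le_nhds (s := s))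
      simpa using this
    have h3 : ContinuousAt (fun x : ℝ => x ^ ai i) 0 :=
      Real.continuousAt_rpow_const _ _ (Or.inr (hαi i).le)
    have h4 := h3.tendsto.comp h1
    simpa [Function.comp_def, Real.zero_rpow (ne_of_gt (hαi i))] using h4
  have hfin : Tendsto (fun z => dist (vext r c u n z) (vext r c u n z₀)) (𝓝[s] z₀) (𝓝 0) := by
    apply squeeze_zero' (Filter.Eventually.of_forall fun z => dist_nonneg) hev
    simpa using htend0
  exact tendsto_iff_dist_tendsto_zero.mpr hfin

end U
end Stmt15

/-- (Dyadic Kolmogorov-type Hölder extension, deterministic) Let `r ≥ 1`,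
`c_1,…,c_r ≥ 2`, `α > 0`. There is `N = N(r,c,α)` such that for every
`u : Z^r_∞(c) → ℝ` and integer `n ≥ 0` satisfying: for any `m ≥ n`, `i`, and
`z₁, z₂ ∈ Z^r_m(c)` with `|z₁^i - z₂^i| ≤ c_i^{-m}` and `z₁^j = z₂^j` for `j ≠ i`,
`|u z₁ - u z₂| ≤ 2^{-mα}` — one has: for all `z₁, z₂ ∈ Z^r_∞(c)` with
`|z₁^i - z₂^i| ≤ c_i^{-n-1}` for all `i`,
`|u z₁ - u z₂| ≤ N maxᵢ |z₁^i - z₂^i|^{α_i}`, `α_i = α ln 2 / ln c_i`; moreover `u`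
extends continuously to `[0,1]^r` and the same estimate holds there. -/
theorem stmt_15 (r : ℕ) (hr : 1 ≤ r) (c : Fin r → ℕ) (hc : ∀ i, 2 ≤ c i)
    (α : ℝ) (hα : 0 < α) :
    ∃ N : ℝ, ∀ (u : (Fin r → ℝ) → ℝ) (n : ℕ),
      (∀ m : ℕ, n ≤ m → ∀ i : Fin r,
        ∀ z₁ ∈ lattice r c m, ∀ z₂ ∈ lattice r c m,
          |z₁ i - z₂ i| ≤ ((c i : ℝ) ^ m)⁻¹ → (∀ j, j ≠ i → z₁ j = z₂ j) →
          |u z₁ - u z₂| ≤ (2 : ℝ) ^ (-(m : ℝ) * α)) →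
      (∀ z₁ ∈ latticeInf r c, ∀ z₂ ∈ latticeInf r c,
        (∀ i, |z₁ i - z₂ i| ≤ ((c i : ℝ) ^ (n + 1))⁻¹) →
        |u z₁ - u z₂| ≤
          N * ⨆ i : Fin r, |z₁ i - z₂ i| ^ (α * Real.log 2 / Real.log (c i))) ∧
      ∃ v : (Fin r → ℝ) → ℝ,
        ContinuousOn v (Set.univ.pi fun _ : Fin r => Set.Icc (0 : ℝ) 1) ∧
        (∀ z ∈ latticeInf r c, v z = u z) ∧
        ∀ z₁ ∈ Set.univ.pi fun _ : Fin r => Set.Icc (0 : ℝ) 1,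
        ∀ z₂ ∈ Set.univ.pi fun _ : Fin r => Set.Icc (0 : ℝ) 1,
          (∀ i, |z₁ i - z₂ i| ≤ ((c i : ℝ) ^ (n + 1))⁻¹) →
          |v z₁ - v z₂| ≤
            N * ⨆ i : Fin r, |z₁ i - z₂ i| ^ (α * Real.log 2 / Real.log (c i)) := by
  refine ⟨(2 * (∑ i, ((c i - 1 : ℕ) : ℝ)) * ((2:ℝ)^α - 1)⁻¹ + 2 * r) * (2:ℝ)^α, ?_⟩
  intro u n hu
  have hu' : Stmt15.Hyp r c α u n := hu
  constructor
  · intro z₁ h₁ z₂ h₂ hd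
    apply Stmt15.core hr hc hα hu' h₁ h₂
    intro i
    refine le_trans (hd i) ?_
    have hc1 : (1:ℝ) ≤ (c i : ℝ) := by
      have := hc i
      have : (2:ℝ) ≤ (c i : ℝ) := by exact_mod_cast this
      linarith
    exact inv_anti₀ (Stmt15.cpowpos hc i n) (pow_le_pow_right₀ hc1 (by omega))
  · refine ⟨Stmt15.vext r c u n, Stmt15.vext_cont hr hc hα hu', fun z hz => Stmt15.vext_eq hc hz, ?_⟩
    intro z₁ h₁ z₂ h₂ hd
    exact Stmt15.vext_holder hr hc hα hu'
      (fun i => h₁ i (Set.mem_univ i)) (fun i => h₂ i (Set.mem_univ i)) hd
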